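/- Let Γ be a reflexive vertex-transitive relation on a finite set V, let v ∈ V, and let F ⊆ V with v ∈ F. Then |Γ(F)| ≥ |F| + |Γ(v)| − |Γ⁻(v) ∩ F|. -/

import Mathlib

set_option linter.unusedSectionVars false


open Set Pointwise

variable {V : Type*}

/-- Image of a set under the relation. -/
def img (Γ : V → Set V) (F : Set V) : Set V := ⋃ x ∈ F, Γ x
/-- Reverse relation. -/
def rev (Γ : V → Set V) : V → Set V := fun y => {x | y ∈ Γ x}
/-- Boundary ∂(F) = Γ(F) \ F. -/
def bd (Γ : V → Set V) (F : Set V) : Set V := img Γ F \ F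
/-- ∇(F) = V \ (F ∪ Γ(F)). -/
def nab (Γ : V → Set V) (F : Set V) : Set V := (F ∪ img Γ F)ᶜ
/-- Reflexive relation. -/
def Refl (Γ : V → Set V) : Prop := ∀ x, x ∈ Γ x
/-- Locally finite relation. -/
def LocFin (Γ : V → Set V) : Prop := ∀ x, (Γ x).Finite
/-- Automorphism of the relation. -/
def IsAuto (Γ : V → Set V) (φ : V ≃ V) : Prop := ∀ x, Γ (φ x) = φ '' Γ x
/-- Vertex-transitivity. -/
def VT (Γ : V → Set V) : Prop := ∀ x y : V, ∃ φ : V ≃ V, IsAuto Γ φ ∧ φ x = y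
/-- A finite v-Moser set. -/
def MoserSet (Γ : V → Set V) (v : V) (F : Set V) : Prop :=
  F.Finite ∧ v ∈ F ∧ rev Γ v ∩ F = {v}
/-- μ(v): minimum boundary size over v-Moser sets. -/
noncomputable def mu (Γ : V → Set V) (v : V) : ℕ :=
  sInf {n | ∃ F, MoserSet Γ v F ∧ (bd Γ F).ncard = n}
/-- A v-molecule: Moser set of minimum boundary. -/
def Molecule (Γ : V → Set V) (v : V) (F : Set V) : Prop :=
  MoserSet Γ v F ∧ (bd Γ F).ncard = mu Γ v
/-- The v-kernel: the unique minimal v-molecule. -/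
def IsKernel (Γ : V → Set V) (v : V) (K : Set V) : Prop :=
  Molecule Γ v K ∧ ∀ F, Molecule Γ v F → K ⊆ F
/-- Weak connectivity κ₀. -/
noncomputable def kappa0 (Γ : V → Set V) : ℕ :=
  sInf {n | ∃ X : Set V, X.Finite ∧ X.Nonempty ∧ (bd Γ X).ncard = n}
/-- Weak fragment. -/
def WeakFragment (Γ : V → Set V) (X : Set V) : Prop :=
  X.Finite ∧ X.Nonempty ∧ (bd Γ X).ncard = kappa0 Γ
/-- Weak atom: a weak fragment of minimum cardinality. -/
def WeakAtom (Γ : V → Set V) (X : Set V) : Prop :=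
  WeakFragment Γ X ∧ ∀ Y, WeakFragment Γ Y → X.ncard ≤ Y.ncard

/-
Auxiliary development for the proof of `stmt10`.

Outline of the proof (a Scherk–Kemperman theorem for vertex-transitive relations):
* We reduce (by induction, deleting points of `rev Γ v ∩ F` other than `v`) to the
  case of a Moser set, where the claim becomes `μ(v) ≥ |Γ v| − 1`.
* The boundary functional is submodular, so molecules at a fixed basepoint are closed
  under unions; hence there is a maximum molecule `Mx Γ v` at each point, which is
  canonical and hence equivariant under automorphisms.
* Key lemma: if `w ∈ Γ z` but `z ∉ Γ(Mx Γ w)` then `w ∉ Mx Γ z`.  Indeed, otherwise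
  `Mx Γ z ∩ Mx Γ w` is a Moser set at `w` and `Mx Γ z ∪ Mx Γ w` is a Moser set at `z`;
  submodularity then forces the union to be a `z`-molecule, hence contained in `Mx Γ z`,
  so `Mx Γ w ⊆ Mx Γ z`, and since both have the same cardinality they are equal,
  contradicting `z ∉ Γ(Mx Γ w)`.
* Moreover such `w` satisfies `w ∉ rev Γ z`.  Hence `bd (Mx Γ z)` contains the disjoint
  union of `rev Γ z ∩ bd (Mx Γ z)` and the set `Eo z` of "blind" out-neighbours.
* By vertex-transitivity and double counting, `|Eo v| = |Zi v|`, the number of blind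
  in-neighbours, and `rev Γ v ⊆ {v} ∪ (rev Γ v ∩ bd (Mx Γ v)) ∪ Zi v`.  Combining gives
  `|rev Γ v| ≤ μ(v) + 1`, and `|Γ v| = |rev Γ v|` by another double count.
-/

section SKAux

lemma mem_img' {Γ : V → Set V} {F : Set V} {x : V} : x ∈ img Γ F ↔ ∃ y ∈ F, x ∈ Γ y := by
  simp [img]

lemma subset_img' {Γ : V → Set V} (hr : Refl Γ) (F : Set V) : F ⊆ img Γ F :=
  fun x hx => mem_img'.2 ⟨x, hx, hr x⟩

lemma img_mono' {Γ : V → Set V} {F G : Set V} (h : F ⊆ G) : img Γ F ⊆ img Γ G := by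
  intro x hx; rcases mem_img'.1 hx with ⟨y, hy, hxy⟩; exact mem_img'.2 ⟨y, h hy, hxy⟩

lemma img_union' {Γ : V → Set V} {A B : Set V} : img Γ (A ∪ B) = img Γ A ∪ img Γ B := by
  ext x; simp [mem_img', or_and_right, exists_or]

lemma img_inter_subset' {Γ : V → Set V} {A B : Set V} :
    img Γ (A ∩ B) ⊆ img Γ A ∩ img Γ B :=
  subset_inter (img_mono' inter_subset_left) (img_mono' inter_subset_right)

lemma subset_img_of_mem' {Γ : V → Set V} {F : Set V} {x : V} (hx : x ∈ F) :
    Γ x ⊆ img Γ F := by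
  intro t ht; exact mem_img'.2 ⟨x, hx, ht⟩

section CardAux

variable [Finite V] {Γ : V → Set V}

lemma card_img' (hr : Refl Γ) (F : Set V) :
    (img Γ F).ncard = F.ncard + (bd Γ F).ncard := by
  have h1 := Set.ncard_diff_add_ncard_of_subset (subset_img' hr F) (Set.toFinite _)
  unfold bd
  omega

lemma card_submod' (A B : Set V) :
    (img Γ (A ∪ B)).ncard + (img Γ (A ∩ B)).ncard
      ≤ (img Γ A).ncard + (img Γ B).ncard := by
  have h1 : (img Γ A ∪ img Γ B).ncard + (img Γ A ∩ img Γ B).ncard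
      = (img Γ A).ncard + (img Γ B).ncard :=
    Set.ncard_union_add_ncard_inter _ _ (Set.toFinite _) (Set.toFinite _)
  have h2 : (img Γ (A ∩ B)).ncard ≤ (img Γ A ∩ img Γ B).ncard :=
    Set.ncard_le_ncard img_inter_subset' (Set.toFinite _)
  rw [img_union']
  omega

end CardAux

section AutoAux

variable {Γ : V → Set V} {φ : V ≃ V}

lemma isAuto_symm' (hφ : IsAuto Γ φ) : IsAuto Γ φ.symm := by
  intro x
  have := hφ (φ.symm x)
  rw [φ.apply_symm_apply] at this
  rw [this, ← Set.image_comp]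
  simp

lemma img_image' (hφ : IsAuto Γ φ) (F : Set V) :
    img Γ (φ '' F) = φ '' img Γ F := by
  ext t
  constructor
  · rintro ht
    simp only [img, Set.mem_iUnion] at ht
    obtain ⟨a, ⟨y, hy, rfl⟩, hta⟩ := ht
    rw [hφ y] at hta
    obtain ⟨s, hs, rfl⟩ := hta
    exact ⟨s, by simpa [img] using ⟨y, hy, hs⟩, rfl⟩
  · rintro ⟨s, hs, rfl⟩
    simp only [img, Set.mem_iUnion] at hs ⊢
    obtain ⟨y, hy, hs⟩ := hs
    exact ⟨φ y, ⟨y, hy, rfl⟩, by rw [hφ y]; exact ⟨s, hs, rfl⟩⟩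

lemma rev_image' (hφ : IsAuto Γ φ) (x : V) :
    rev Γ (φ x) = φ '' rev Γ x := by
  ext t
  constructor
  · intro ht
    refine ⟨φ.symm t, ?_, by simp⟩
    have h : φ x ∈ Γ t := ht
    rw [show t = φ (φ.symm t) by simp, hφ (φ.symm t)] at h
    obtain ⟨s, hs, hsx⟩ := h
    have : s = x := φ.injective hsx
    subst this
    exact hs
  · rintro ⟨s, hs, rfl⟩
    show φ x ∈ Γ (φ s)
    rw [hφ s]
    exact ⟨x, hs, rfl⟩

lemma bd_image' (hφ : IsAuto Γ φ) (F : Set V) :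
    bd Γ (φ '' F) = φ '' bd Γ F := by
  unfold bd
  rw [img_image' hφ, Set.image_diff φ.injective]

lemma moser_image' {x : V} {F : Set V} (hφ : IsAuto Γ φ) (h : MoserSet Γ x F) :
    MoserSet Γ (φ x) (φ '' F) := by
  obtain ⟨hfin, hmem, hrev⟩ := h
  refine ⟨hfin.image _, ⟨x, hmem, rfl⟩, ?_⟩
  rw [rev_image' hφ, ← Set.image_inter φ.injective, hrev, Set.image_singleton]

lemma mu_image' (hφ : IsAuto Γ φ) (x : V) : mu Γ (φ x) = mu Γ x := by
  unfold mu
  congr 1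
  ext n
  constructor
  · rintro ⟨F, hF, rfl⟩
    refine ⟨φ.symm '' F, ?_, ?_⟩
    · have := moser_image' (isAuto_symm' hφ) hF
      rwa [φ.symm_apply_apply] at this
    · rw [bd_image' (isAuto_symm' hφ), Set.ncard_image_of_injective _ φ.symm.injective]
  · rintro ⟨F, hF, rfl⟩
    exact ⟨φ '' F, moser_image' hφ hF,
      by rw [bd_image' hφ, Set.ncard_image_of_injective _ φ.injective]⟩

end AutoAux

section MoleculeAux

variable [Finite V] {Γ : V → Set V} {v : V} {F F₁ F₂ : Set V}

lemma moser_singleton' (hr : Refl Γ) (v : V) : MoserSet Γ v {v} := by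
  refine ⟨Set.finite_singleton v, rfl, ?_⟩
  apply Set.eq_singleton_iff_unique_mem.2
  exact ⟨⟨hr v, rfl⟩, fun x hx => hx.2⟩

lemma mu_le' (h : MoserSet Γ v F) : mu Γ v ≤ (bd Γ F).ncard :=
  Nat.sInf_le ⟨F, h, rfl⟩

lemma exists_molecule' (hr : Refl Γ) (v : V) : ∃ F, Molecule Γ v F := by
  have h := Nat.sInf_mem (⟨_, {v}, moser_singleton' hr v, rfl⟩ :
    {n | ∃ F, MoserSet Γ v F ∧ (bd Γ F).ncard = n}.Nonempty)
  obtain ⟨F, hF, hcard⟩ := h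
  exact ⟨F, hF, hcard⟩

lemma moser_inter' (h₁ : MoserSet Γ v F₁) (h₂ : MoserSet Γ v F₂) :
    MoserSet Γ v (F₁ ∩ F₂) := by
  refine ⟨h₁.1.subset inter_subset_left, ⟨h₁.2.1, h₂.2.1⟩, ?_⟩
  apply Set.eq_singleton_iff_unique_mem.2
  have hv : v ∈ rev Γ v := by
    have : v ∈ rev Γ v ∩ F₁ := h₁.2.2 ▸ rfl
    exact this.1
  refine ⟨⟨hv, h₁.2.1, h₂.2.1⟩, ?_⟩
  intro x hx
  have : x ∈ rev Γ v ∩ F₁ := ⟨hx.1, hx.2.1⟩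
  rw [h₁.2.2] at this
  exact this

lemma moser_union' (h₁ : MoserSet Γ v F₁) (h₂ : MoserSet Γ v F₂) :
    MoserSet Γ v (F₁ ∪ F₂) := by
  refine ⟨h₁.1.union h₂.1, Or.inl h₁.2.1, ?_⟩
  rw [Set.inter_union_distrib_left, h₁.2.2, h₂.2.2, Set.union_self]

lemma molecule_union' (hr : Refl Γ) (h₁ : Molecule Γ v F₁) (h₂ : Molecule Γ v F₂) :
    Molecule Γ v (F₁ ∪ F₂) := by
  have hU : MoserSet Γ v (F₁ ∪ F₂) := moser_union' h₁.1 h₂.1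
  have hP : MoserSet Γ v (F₁ ∩ F₂) := moser_inter' h₁.1 h₂.1
  refine ⟨hU, le_antisymm ?_ (mu_le' hU)⟩
  have hsub := card_submod' (Γ := Γ) F₁ F₂
  rw [card_img' hr (F₁ ∪ F₂), card_img' hr (F₁ ∩ F₂), card_img' hr F₁, card_img' hr F₂,
    h₁.2, h₂.2] at hsub
  have hcards : (F₁ ∪ F₂).ncard + (F₁ ∩ F₂).ncard = F₁.ncard + F₂.ncard :=
    Set.ncard_union_add_ncard_inter _ _ (Set.toFinite _) (Set.toFinite _)
  have hPmu : mu Γ v ≤ (bd Γ (F₁ ∩ F₂)).ncard := mu_le' hP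
  omega

end MoleculeAux

/-- The maximum v-molecule. -/
noncomputable def Mx (Γ : V → Set V) (v : V) : Set V := ⋃₀ {F | Molecule Γ v F}

section MxAux

variable [Finite V] {Γ : V → Set V} {φ : V ≃ V} {v x : V} {F : Set V}

lemma molecule_image' (hφ : IsAuto Γ φ) (h : Molecule Γ x F) :
    Molecule Γ (φ x) (φ '' F) := by
  refine ⟨moser_image' hφ h.1, ?_⟩
  rw [bd_image' hφ, Set.ncard_image_of_injective _ φ.injective, mu_image' hφ, h.2]

lemma exists_max_molecule' (hr : Refl Γ) (v : V) :
    ∃ M, Molecule Γ v M ∧ ∀ F, Molecule Γ v F → F ⊆ M := by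
  obtain ⟨M, hM, hmax⟩ := Set.Finite.exists_maximalFor Set.ncard
    {F | Molecule Γ v F} (Set.toFinite _) (exists_molecule' hr v)
  refine ⟨M, hM, fun F hF => ?_⟩
  have hU : Molecule Γ v (F ∪ M) := molecule_union' hr hF hM
  have hle : M.ncard ≤ (F ∪ M).ncard := Set.ncard_le_ncard subset_union_right (Set.toFinite _)
  have heq : M.ncard = (F ∪ M).ncard := le_antisymm hle (hmax hU hle)
  have : F ∪ M = M :=
    (Set.eq_of_subset_of_ncard_le subset_union_right heq.ge (Set.toFinite _)).symm
  exact this ▸ subset_union_left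

lemma molecule_Mx' (hr : Refl Γ) (v : V) : Molecule Γ v (Mx Γ v) := by
  obtain ⟨M, hM, hmax⟩ := exists_max_molecule' hr v
  have : Mx Γ v = M := by
    apply subset_antisymm
    · exact Set.sUnion_subset fun F hF => hmax F hF
    · exact Set.subset_sUnion_of_mem hM
  rw [this]; exact hM

lemma subset_Mx' (h : Molecule Γ v F) : F ⊆ Mx Γ v :=
  Set.subset_sUnion_of_mem h

lemma Mx_image' (hφ : IsAuto Γ φ) (x : V) : φ '' Mx Γ x = Mx Γ (φ x) := by
  apply subset_antisymm
  · rintro t ⟨s, hs, rfl⟩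
    obtain ⟨F, hF, hsF⟩ := hs
    exact (Set.subset_sUnion_of_mem
      (show (φ '' F) ∈ {G | Molecule Γ (φ x) G} from molecule_image' hφ hF)) ⟨s, hsF, rfl⟩
  · rintro t ⟨F, hF, htF⟩
    have h2 : Molecule Γ (φ.symm (φ x)) (φ.symm '' F) := molecule_image' (isAuto_symm' hφ) hF
    rw [φ.symm_apply_apply] at h2
    refine ⟨φ.symm t, (Set.subset_sUnion_of_mem
      (show (φ.symm '' F) ∈ {G | Molecule Γ x G} from h2)) ⟨t, htF, rfl⟩, by simp⟩

lemma card_Mx_image' (hφ : IsAuto Γ φ) (x : V) : (Mx Γ (φ x)).ncard = (Mx Γ x).ncard := by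
  rw [← Mx_image' hφ, Set.ncard_image_of_injective _ φ.injective]

end MxAux

section KeyAux

variable [Finite V] {Γ : V → Set V} {z w : V}

/-- Key lemma: a "blind" out-neighbour lies outside the maximal molecule. -/
lemma key_not_mem' (hr : Refl Γ) (hvt : VT Γ)
    (hinvis : z ∉ img Γ (Mx Γ w)) : w ∉ Mx Γ z := by
  intro hwin
  set A := Mx Γ z with hAdef
  set B := Mx Γ w with hBdef
  have hA : Molecule Γ z A := molecule_Mx' hr z
  have hB : Molecule Γ w B := molecule_Mx' hr w
  obtain ⟨φ, hφ, hφz⟩ := hvt z w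
  have hmu_eq : mu Γ w = mu Γ z := by rw [← hφz, mu_image' hφ]
  have hcard_eq : B.ncard = A.ncard := by rw [hBdef, hAdef, ← hφz, card_Mx_image' hφ]
  have hUM : MoserSet Γ z (A ∪ B) := by
    refine ⟨Set.toFinite _, Or.inl hA.1.2.1, ?_⟩
    have hrevB : rev Γ z ∩ B = ∅ := by
      ext x
      simp only [Set.mem_inter_iff, Set.mem_empty_iff_false, iff_false, not_and]
      intro hx hxB
      exact hinvis (subset_img_of_mem' hxB hx)
    rw [Set.inter_union_distrib_left, hA.1.2.2, hrevB, Set.union_empty]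
  have hPM : MoserSet Γ w (A ∩ B) := by
    refine ⟨Set.toFinite _, ⟨hwin, hB.1.2.1⟩, ?_⟩
    apply Set.eq_singleton_iff_unique_mem.2
    refine ⟨⟨hr w, hwin, hB.1.2.1⟩, fun x hx => ?_⟩
    have : x ∈ rev Γ w ∩ B := ⟨hx.1, hx.2.2⟩
    rw [hB.1.2.2] at this
    exact this
  have hsub := card_submod' (Γ := Γ) A B
  rw [card_img' hr (A ∪ B), card_img' hr (A ∩ B), card_img' hr A, card_img' hr B,
    hA.2, hB.2, hmu_eq] at hsub
  have hcards : (A ∪ B).ncard + (A ∩ B).ncard = A.ncard + B.ncard :=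
    Set.ncard_union_add_ncard_inter _ _ (Set.toFinite _) (Set.toFinite _)
  have hPmu : mu Γ z ≤ (bd Γ (A ∩ B)).ncard := hmu_eq ▸ mu_le' hPM
  have hUmu : mu Γ z ≤ (bd Γ (A ∪ B)).ncard := mu_le' hUM
  have hUeq : (bd Γ (A ∪ B)).ncard = mu Γ z := by omega
  have hUmol : Molecule Γ z (A ∪ B) := ⟨hUM, hUeq⟩
  have hBA : B ⊆ A := subset_union_right.trans (subset_Mx' hUmol)
  have hBeqA : B = A := Set.eq_of_subset_of_ncard_le hBA hcard_eq.ge (Set.toFinite _)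
  exact hinvis (subset_img' hr B (hBeqA ▸ hA.1.2.1))

lemma key_not_rev' (hr : Refl Γ) (hinvis : z ∉ img Γ (Mx Γ w)) : w ∉ rev Γ z := by
  intro hzw
  exact hinvis (subset_img_of_mem' (molecule_Mx' hr w).1.2.1 hzw)

end KeyAux

section CountAux

variable [Fintype V]

open Classical in
lemma sum_count' (Q : V → V → Prop) :
    ∑ u : V, {w | Q u w}.ncard = ∑ w : V, {z | Q z w}.ncard := by
  have h1 : ∀ u : V, {w | Q u w}.ncard = ∑ w : V, if Q u w then 1 else 0 := by
    intro u
    have h : {w | Q u w} = ↑(Finset.univ.filter (fun w => Q u w)) := by ext w; simp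
    rw [h, Set.ncard_coe_finset, Finset.card_filter]
  have h2 : ∀ w : V, {z | Q z w}.ncard = ∑ z : V, if Q z w then 1 else 0 := by
    intro w
    have h : {z | Q z w} = ↑(Finset.univ.filter (fun z => Q z w)) := by ext z; simp
    rw [h, Set.ncard_coe_finset, Finset.card_filter]
  simp_rw [h1, h2]
  exact Finset.sum_comm

lemma eq_of_const_sum' (f g : V → ℕ) (v : V)
    (hf : ∀ u u' : V, f u = f u') (hg : ∀ u u' : V, g u = g u')
    (hsum : ∑ u : V, f u = ∑ u : V, g u) : f v = g v := by
  have h1 : ∑ u : V, f u = Fintype.card V * f v := by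
    rw [Finset.sum_congr rfl (fun u _ => hf u v), Finset.sum_const, smul_eq_mul,
      Finset.card_univ]
  have h2 : ∑ u : V, g u = Fintype.card V * g v := by
    rw [Finset.sum_congr rfl (fun u _ => hg u v), Finset.sum_const, smul_eq_mul,
      Finset.card_univ]
  haveI : Nonempty V := ⟨v⟩
  have hpos : 0 < Fintype.card V := Fintype.card_pos
  rw [h1, h2] at hsum
  exact Nat.eq_of_mul_eq_mul_left hpos hsum

end CountAux

/-- Blind out-neighbours. -/
def Eo (Γ : V → Set V) (u : V) : Set V := {w | w ∈ Γ u ∧ u ∉ img Γ (Mx Γ w)}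
/-- Blind in-neighbours. -/
def Zi (Γ : V → Set V) (u : V) : Set V := {z | u ∈ Γ z ∧ z ∉ img Γ (Mx Γ u)}

section MainAux

variable [Finite V] {Γ : V → Set V} {φ : V ≃ V} {u v : V}

lemma mem_image_equiv_iff' {S : Set V} {t : V} : φ t ∈ φ '' S ↔ t ∈ S :=
  ⟨fun h => by rcases h with ⟨s, hs, hst⟩; rwa [← φ.injective hst], fun h => ⟨t, h, rfl⟩⟩

lemma imgMx_image' (hφ : IsAuto Γ φ) (w : V) :
    img Γ (Mx Γ (φ w)) = φ '' img Γ (Mx Γ w) := by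
  rw [← Mx_image' hφ, img_image' hφ]

lemma Eo_image' (hφ : IsAuto Γ φ) (u : V) : Eo Γ (φ u) = φ '' Eo Γ u := by
  ext t
  constructor
  · rintro ⟨ht1, ht2⟩
    rw [hφ u] at ht1
    obtain ⟨w, hw, rfl⟩ := ht1
    refine ⟨w, ⟨hw, fun hmem => ht2 ?_⟩, rfl⟩
    rw [imgMx_image' hφ]
    exact ⟨u, hmem, rfl⟩
  · rintro ⟨w, ⟨hw1, hw2⟩, rfl⟩
    refine ⟨by rw [hφ u]; exact ⟨w, hw1, rfl⟩, fun hmem => hw2 ?_⟩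
    rw [imgMx_image' hφ] at hmem
    exact mem_image_equiv_iff'.1 hmem

lemma Zi_image' (hφ : IsAuto Γ φ) (u : V) : Zi Γ (φ u) = φ '' Zi Γ u := by
  ext t
  constructor
  · rintro ⟨ht1, ht2⟩
    have ht1' : t ∈ rev Γ (φ u) := ht1
    rw [rev_image' hφ] at ht1'
    obtain ⟨z, hz, rfl⟩ := ht1'
    refine ⟨z, ⟨hz, fun hmem => ht2 ?_⟩, rfl⟩
    rw [imgMx_image' hφ]
    exact ⟨z, hmem, rfl⟩
  · rintro ⟨z, ⟨hz1, hz2⟩, rfl⟩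
    constructor
    · have h : z ∈ rev Γ u := hz1
      have h2 : φ z ∈ rev Γ (φ u) := by rw [rev_image' hφ]; exact ⟨z, h, rfl⟩
      exact h2
    · intro hmem
      rw [imgMx_image' hφ] at hmem
      exact hz2 (mem_image_equiv_iff'.1 hmem)

lemma Eo_card_const' (hvt : VT Γ) (u u' : V) : (Eo Γ u).ncard = (Eo Γ u').ncard := by
  obtain ⟨φ, hφ, rfl⟩ := hvt u u'
  rw [Eo_image' hφ, Set.ncard_image_of_injective _ φ.injective]

lemma Zi_card_const' (hvt : VT Γ) (u u' : V) : (Zi Γ u).ncard = (Zi Γ u').ncard := by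
  obtain ⟨φ, hφ, rfl⟩ := hvt u u'
  rw [Zi_image' hφ, Set.ncard_image_of_injective _ φ.injective]

lemma deg_card_const' (hvt : VT Γ) (u u' : V) : (Γ u).ncard = (Γ u').ncard := by
  obtain ⟨φ, hφ, rfl⟩ := hvt u u'
  rw [hφ u, Set.ncard_image_of_injective _ φ.injective]

lemma rev_card_const' (hvt : VT Γ) (u u' : V) : (rev Γ u).ncard = (rev Γ u').ncard := by
  obtain ⟨φ, hφ, rfl⟩ := hvt u u'
  rw [rev_image' hφ, Set.ncard_image_of_injective _ φ.injective]

lemma Eo_card_eq_Zi_card' (hvt : VT Γ) (v : V) : (Eo Γ v).ncard = (Zi Γ v).ncard := by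
  letI : Fintype V := Fintype.ofFinite V
  exact eq_of_const_sum' (fun u => (Eo Γ u).ncard) (fun u => (Zi Γ u).ncard) v
    (Eo_card_const' hvt) (Zi_card_const' hvt)
    (sum_count' (fun u w => w ∈ Γ u ∧ u ∉ img Γ (Mx Γ w)))

lemma deg_eq_rev_card' (hvt : VT Γ) (v : V) : (Γ v).ncard = (rev Γ v).ncard := by
  letI : Fintype V := Fintype.ofFinite V
  refine eq_of_const_sum' (fun u => (Γ u).ncard) (fun u => (rev Γ u).ncard) v
    (deg_card_const' hvt) (rev_card_const' hvt) ?_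
  have h := sum_count' (fun u w => w ∈ Γ u)
  simpa [Set.setOf_mem_eq, rev] using h

/-- The main estimate: the in-degree is at most μ(v) + 1. -/
lemma rev_le_mu' (hr : Refl Γ) (hvt : VT Γ) (v : V) :
    (rev Γ v).ncard ≤ mu Γ v + 1 := by
  set A := Mx Γ v with hAdef
  have hA : Molecule Γ v A := molecule_Mx' hr v
  set B := rev Γ v ∩ bd Γ A with hBdef
  have hcover : rev Γ v ⊆ {v} ∪ B ∪ Zi Γ v := by
    intro x hx
    by_cases hx2 : x ∈ img Γ A
    · by_cases hx3 : x ∈ A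
      · left; left
        have : x ∈ rev Γ v ∩ A := ⟨hx, hx3⟩
        rw [hA.1.2.2] at this
        exact this
      · left; right; exact ⟨hx, hx2, hx3⟩
    · right; exact ⟨hx, hx2⟩
  have hcard1 : (rev Γ v).ncard ≤ 1 + B.ncard + (Zi Γ v).ncard := by
    calc (rev Γ v).ncard ≤ ({v} ∪ B ∪ Zi Γ v).ncard :=
          Set.ncard_le_ncard hcover (Set.toFinite _)
    _ ≤ ({v} ∪ B).ncard + (Zi Γ v).ncard := Set.ncard_union_le _ _
    _ ≤ ({v} : Set V).ncard + B.ncard + (Zi Γ v).ncard := by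
          have := Set.ncard_union_le ({v} : Set V) B
          omega
    _ = 1 + B.ncard + (Zi Γ v).ncard := by rw [Set.ncard_singleton]
  have hEo_bd : Eo Γ v ⊆ bd Γ A := by
    rintro w ⟨hw1, hw2⟩
    exact ⟨subset_img_of_mem' hA.1.2.1 hw1, key_not_mem' hr hvt hw2⟩
  have hB_bd : B ⊆ bd Γ A := inter_subset_right
  have hdisj : Disjoint B (Eo Γ v) := by
    rw [Set.disjoint_left]
    rintro w hwB ⟨_, hw2⟩
    exact key_not_rev' hr hw2 hwB.1
  have hmu : B.ncard + (Eo Γ v).ncard ≤ mu Γ v := by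
    have hsub : B ∪ Eo Γ v ⊆ bd Γ A := union_subset hB_bd hEo_bd
    have h1 : (B ∪ Eo Γ v).ncard = B.ncard + (Eo Γ v).ncard :=
      Set.ncard_union_eq hdisj (Set.toFinite _) (Set.toFinite _)
    have h2 : (B ∪ Eo Γ v).ncard ≤ (bd Γ A).ncard :=
      Set.ncard_le_ncard hsub (Set.toFinite _)
    rw [hA.2] at h2
    omega
  have hEZ : (Eo Γ v).ncard = (Zi Γ v).ncard := Eo_card_eq_Zi_card' hvt v
  omega

/-- Moser case of the theorem. -/
lemma moser_bound' (hr : Refl Γ) (hvt : VT Γ) {v : V} {F : Set V} (hM : MoserSet Γ v F) :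
    F.ncard + (Γ v).ncard ≤ (img Γ F).ncard + 1 := by
  have h1 := card_img' hr F
  have h2 : mu Γ v ≤ (bd Γ F).ncard := mu_le' hM
  have h3 := rev_le_mu' hr hvt v
  have h4 := deg_eq_rev_card' hvt v
  omega

end MainAux

end SKAux

/-- Finite case of the main theorem. -/
theorem stmt10 {V : Type*} [Finite V] (Γ : V → Set V) (hr : Refl Γ) (hvt : VT Γ)
    (v : V) (F : Set V) (hvF : v ∈ F) :
    F.ncard + (Γ v).ncard - (rev Γ v ∩ F).ncard ≤ (img Γ F).ncard := by
  have main : ∀ n (F : Set V), v ∈ F → (rev Γ v ∩ F).ncard = n →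
      F.ncard + (Γ v).ncard ≤ (img Γ F).ncard + (rev Γ v ∩ F).ncard := by
    intro n
    induction n using Nat.strong_induction_on with
    | _ n ih =>
      intro F hvF hn
      by_cases hM : rev Γ v ∩ F = {v}
      · have hMoser : MoserSet Γ v F := ⟨Set.toFinite _, hvF, hM⟩
        have h := moser_bound' hr hvt hMoser
        rw [hM, Set.ncard_singleton]
        omega
      · have hvmem : v ∈ rev Γ v ∩ F := ⟨hr v, hvF⟩
        have hex : ∃ x ∈ rev Γ v ∩ F, x ≠ v := by
          by_contra h
          push_neg at h
          exact hM (Set.eq_singleton_iff_unique_mem.2 ⟨hvmem, h⟩)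
        obtain ⟨x, hxmem, hxv⟩ := hex
        set F' := F \ {x} with hF'def
        have hvF' : v ∈ F' := ⟨hvF, fun h => hxv (show x = v from (Set.mem_singleton_iff.1 h).symm)⟩
        have hrevF' : rev Γ v ∩ F' = (rev Γ v ∩ F) \ {x} := by
          ext y
          simp only [hF'def, Set.mem_inter_iff, Set.mem_diff, Set.mem_singleton_iff]
          tauto
        have hnpos : 0 < n := by
          rw [← hn]
          exact (Set.ncard_pos (Set.toFinite _)).2 ⟨v, hvmem⟩
        have hcard' : (rev Γ v ∩ F').ncard = n - 1 := by
          rw [hrevF']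
          have := Set.ncard_diff_singleton_add_one hxmem (Set.toFinite _)
          omega
        have ihF := ih (n - 1) (by omega) F' hvF' hcard'
        have h1 : F'.ncard + 1 = F.ncard :=
          Set.ncard_diff_singleton_add_one hxmem.2 (Set.toFinite _)
        have h2 : (rev Γ v ∩ F').ncard + 1 = (rev Γ v ∩ F).ncard := by
          rw [hrevF']
          exact Set.ncard_diff_singleton_add_one hxmem (Set.toFinite _)
        have h3 : (img Γ F').ncard ≤ (img Γ F).ncard :=
          Set.ncard_le_ncard (img_mono' Set.diff_subset) (Set.toFinite _)
        omega
  exact tsub_le_iff_right.2 (main _ F hvF rfl)
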